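/- Let G be a torsion-free commutative transitive group, let Z be an infinite cyclic subgroup of G, and let A = C_G(Z) be the centralizer of Z. Then Z is contained in A, A is contained in the commensurator Comm_G(Z), and Comm_G(Z) is contained in the normalizer N_G(A) of A. -/

import Mathlib

open Pointwise


/-- A monoid is torsion-free if no nontrivial element has finite order. -/
def Monoid.IsTorsionFree (G : Type*) [Monoid G] : Prop :=
  ∀ g : G, g ≠ 1 → ¬IsOfFinOrder g

/-- In a torsion-free commutative transitive group, for an infinite cyclic
subgroup Z with centralizer A one has Z ≤ A ≤ Comm_G(Z) ≤ N_G(A). -/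
theorem cyclic_centralizer_commensurator_normalizer {G : Type*} [Group G]
    (htf : Monoid.IsTorsionFree G)
    (hCT : ∀ a b c : G, a ≠ 1 → b ≠ 1 → c ≠ 1 → Commute a b → Commute b c → Commute a c)
    (Z : Subgroup G) (hZcyc : IsCyclic ↥Z) (hZinf : Infinite ↥Z) :
    Z ≤ Subgroup.centralizer (Z : Set G) ∧
    Subgroup.centralizer (Z : Set G) ≤ Subgroup.Commensurable.commensurator Z ∧
    Subgroup.Commensurable.commensurator Z ≤ Subgroup.normalizer ((Subgroup.centralizer (Z : Set G) : Subgroup G) : Set G) := by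
  -- elements of Z commute with each other
  have hZcomm : ∀ x y : G, x ∈ Z → y ∈ Z → Commute x y := by
    obtain ⟨g, hg⟩ := hZcyc.exists_generator
    intro x y hx hy
    obtain ⟨m, hm⟩ := hg ⟨x, hx⟩
    obtain ⟨n, hn⟩ := hg ⟨y, hy⟩
    have hx' : x = (g : G) ^ m := by
      simpa using (congrArg Subtype.val hm).symm
    have hy' : y = (g : G) ^ n := by
      simpa using (congrArg Subtype.val hn).symm
    rw [hx', hy']
    exact (Commute.refl (g : G)).zpow_zpow m n
  -- key: membership in centralizer is equivalent to commuting with one nontrivial elt of Z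
  have key : ∀ w : G, w ∈ Z → w ≠ 1 → ∀ x : G,
      (x ∈ Subgroup.centralizer (Z : Set G) ↔ Commute w x) := by
    intro w hwZ hw1 x
    constructor
    · intro hx
      exact (Subgroup.mem_centralizer_iff.mp hx w hwZ)
    · intro hcomm
      rw [Subgroup.mem_centralizer_iff]
      intro z hz
      rcases eq_or_ne z 1 with rfl | hz1
      · simp
      rcases eq_or_ne x 1 with rfl | hx1
      · simp
      exact hCT z w x hz1 hw1 hx1 (hZcomm z w hz hwZ) hcomm
  refine ⟨?_, ?_, ?_⟩
  · -- Z ≤ centralizer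
    intro z hz
    rw [Subgroup.mem_centralizer_iff]
    intro y hy
    exact hZcomm y z hy hz
  · -- centralizer ≤ commensurator
    intro a ha
    rw [Subgroup.Commensurable.commensurator_mem_iff]
    have hfix : ∀ x : G, (a⁻¹ * x * a ∈ Z ↔ x ∈ Z) := by
      intro x
      constructor
      · intro h
        have hc : Commute (a⁻¹ * x * a) a :=
          Subgroup.mem_centralizer_iff.mp ha _ h
        have h2 : a * (a⁻¹ * x * a) * a⁻¹ = a⁻¹ * x * a := by
          rw [hc.symm.eq]; group
        have h3 : a * (a⁻¹ * x * a) * a⁻¹ = x := by group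
        rw [h3.symm.trans h2]; exact h
      · intro h
        have hc : Commute x a := Subgroup.mem_centralizer_iff.mp ha x h
        have h4 : a⁻¹ * x * a = x := by rw [mul_assoc, hc.eq]; group
        rw [h4]; exact h
    have hsmul : ConjAct.toConjAct a • Z = Z := by
      ext x
      rw [Subgroup.mem_pointwise_smul_iff_inv_smul_mem, ConjAct.smul_def]
      simp only [map_inv, ConjAct.ofConjAct_toConjAct, inv_inv]
      exact hfix x
    rw [hsmul]
  · -- commensurator ≤ normalizer of centralizer
    intro g hg
    rw [Subgroup.mem_normalizer_iff]
    rw [Subgroup.Commensurable.commensurator_mem_iff] at hg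
    obtain ⟨h1, _⟩ := hg
    -- find a nontrivial element of Z
    obtain ⟨z, hzne⟩ := exists_ne (1 : ↥Z)
    have hzG : (z : G) ≠ 1 := by
      simpa [← Subtype.ext_iff] using hzne
    obtain ⟨n, hn0, _, hmem⟩ :=
      Subgroup.exists_pow_mem_of_relIndex_ne_zero h1 z.2
    set w : G := (z : G) ^ n with hw
    have hwZ : w ∈ Z := hmem.2
    have hwconj : w ∈ ConjAct.toConjAct g • Z := hmem.1
    have hwne : w ≠ 1 := by
      intro hcontra
      exact htf (z : G) hzG (isOfFinOrder_iff_pow_eq_one.mpr ⟨n, hn0, hcontra⟩)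
    -- find z₁ ∈ Z with g z₁ g⁻¹ = w
    obtain ⟨z₁, hz₁Z, hz₁eq⟩ := (Subgroup.mem_smul_pointwise_iff_exists (m := w) (a := ConjAct.toConjAct g) (S := Z)).mp hwconj
    rw [ConjAct.smul_def, ConjAct.ofConjAct_toConjAct] at hz₁eq
    have hz₁ne : z₁ ≠ 1 := by
      intro hcontra
      apply hwne
      rw [← hz₁eq, hcontra]; group
    intro x
    have conj_iff : ∀ u v : G, Commute u v ↔ Commute (g * u * g⁻¹) (g * v * g⁻¹) := by
      intro u v
      constructor
      · intro h
        have := h.map (MulAut.conj g)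
        simpa [MulAut.conj_apply, mul_assoc] using this
      · intro h
        have := h.map (MulAut.conj g⁻¹)
        simpa [MulAut.conj_apply, mul_assoc] using this
    calc x ∈ Subgroup.centralizer (Z : Set G)
        ↔ Commute z₁ x := key z₁ hz₁Z hz₁ne x
      _ ↔ Commute (g * z₁ * g⁻¹) (g * x * g⁻¹) := conj_iff z₁ x
      _ ↔ Commute w (g * x * g⁻¹) := by rw [hz₁eq]
      _ ↔ g * x * g⁻¹ ∈ Subgroup.centralizer (Z : Set G) :=
          (key w hwZ hwne (g * x * g⁻¹)).symm
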